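/- Let $n \geq 1$ and $0 < \theta < 1$. Let $\nu$ be a probability measure on the unit sphere $S^{2n+1} \subset \mathbb{C}^{n+1}$ supported on countably many points $x_1, x_2, \ldots$ with weights $\nu_i > 0$, and suppose that $\int z_j \, d\nu = 0$, $\int z_j \bar z_k \, d\nu = 0$ for $j \neq k$, and $\int |z_j|^2 \, d\nu = \frac{1}{n+1}$, for all complex coordinate functions $z_1, \ldots, z_{n+1}$. Then $\sum_i \nu_i^{\theta} \geq (n+2)^{1-\theta}$. -/

import Mathlib

open scoped ComplexConjugate ENNReal NNReal

theorem stmt_8 (n : ℕ) (hn : 1 ≤ n) (θ : ℝ) (hθ0 : 0 < θ) (hθ1 : θ < 1)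
    (x : ℕ → EuclideanSpace ℂ (Fin (n + 1))) (hx : ∀ i, ‖x i‖ = 1)
    (ν : ℕ → ℝ) (hν : ∀ i, 0 ≤ ν i) (hsum : Summable ν) (htot : ∑' i, ν i = 1)
    (hm1 : ∀ j : Fin (n + 1), ∑' i, (ν i : ℂ) * x i j = 0)
    (hm2 : ∀ j k : Fin (n + 1), j ≠ k →
      ∑' i, (ν i : ℂ) * (x i j * (starRingEnd ℂ) (x i k)) = 0)
    (hm3 : ∀ j : Fin (n + 1), ∑' i, ν i * ‖x i j‖ ^ 2 = 1 / (n + 1)) :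
    ENNReal.ofReal (((n : ℝ) + 2) ^ (1 - θ)) ≤ ∑' i, ENNReal.ofReal (ν i ^ θ) := by
  classical
  have hN1 : (0:ℝ) ≤ (n:ℝ) + 1 := by positivity
  have hN1' : (0:ℝ) < (n:ℝ) + 1 := by positivity
  -- sum of squares of coordinates is 1
  have hxs : ∀ i, ∑ j, ‖x i j‖ ^ 2 = 1 := by
    intro i
    have h := hx i
    rw [EuclideanSpace.norm_eq] at h
    exact Real.sqrt_eq_one.mp h
  set f : Option (Fin (n+1)) → ℕ → ℂ := fun j i =>
    Option.elim j ((Real.sqrt (ν i) : ℂ))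
      (fun k => (Real.sqrt (((n:ℝ)+1) * ν i) : ℂ) * x i k) with hf
  have hf0 : ∀ i, ‖f none i‖ ^ 2 = ν i := by
    intro i
    simp only [hf, Option.elim]
    rw [Complex.norm_real, Real.norm_eq_abs, sq_abs, Real.sq_sqrt (hν i)]
  have hfk : ∀ (k : Fin (n+1)) i, ‖f (some k) i‖ ^ 2 = (((n:ℝ)+1) * ν i) * ‖x i k‖ ^ 2 := by
    intro k i
    simp only [hf, Option.elim]
    rw [norm_mul, mul_pow, Complex.norm_real, Real.norm_eq_abs, sq_abs,
      Real.sq_sqrt (mul_nonneg hN1 (hν i))]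
  have hcoord : ∀ (k : Fin (n+1)) i, ‖x i k‖ ^ 2 ≤ 1 := by
    intro k i
    rw [← hxs i]
    exact Finset.single_le_sum (fun j _ => sq_nonneg ‖x i j‖) (Finset.mem_univ k)
  have hr2 : ∀ a : ℝ, a ^ ((2:ℝ≥0∞).toReal) = a ^ 2 := by
    intro a
    rw [ENNReal.toReal_ofNat, show (2:ℝ) = ((2:ℕ):ℝ) by norm_num, Real.rpow_natCast]
  have hmem : ∀ j, Memℓp (f j) 2 := by
    intro j
    apply memℓp_gen
    cases j with
    | none => simp only [hr2, hf0]; exact hsum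
    | some k =>
      simp only [hr2, hfk]
      refine Summable.of_nonneg_of_le
        (fun i => mul_nonneg (mul_nonneg hN1 (hν i)) (sq_nonneg _)) (fun i => ?_)
        (hsum.mul_left ((n:ℝ)+1))
      have := hcoord k i
      have h0 : 0 ≤ ((n:ℝ)+1) * ν i := mul_nonneg hN1 (hν i)
      nlinarith
  set v : Option (Fin (n+1)) → lp (fun _ : ℕ => ℂ) 2 := fun j => ⟨f j, hmem j⟩ with hvdef
  have hvapp : ∀ j i, (v j : ∀ _ : ℕ, ℂ) i = f j i := fun _ _ => rfl
  -- inner product formula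
  have hinner : ∀ j k, (inner ℂ (v j) (v k) : ℂ) = ∑' i, conj (f j i) * f k i := by
    intro j k
    rw [lp.inner_eq_tsum]
    exact tsum_congr fun i => by rw [hvapp, hvapp]; exact RCLike.inner_apply' _ _
  -- sqrt algebra
  have hsq : ∀ i, Real.sqrt (ν i) * Real.sqrt (((n:ℝ)+1) * ν i)
      = Real.sqrt ((n:ℝ)+1) * ν i := by
    intro i
    rw [Real.sqrt_mul hN1, mul_comm (Real.sqrt ((n:ℝ)+1)), ← mul_assoc,
      Real.mul_self_sqrt (hν i), mul_comm]
  -- orthonormality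
  have honb : Orthonormal ℂ v := by
    rw [orthonormal_iff_ite]
    intro j k
    match j, k with
    | none, none =>
      rw [hinner]
      have hpt : ∀ i, conj (f none i) * f none i = ((ν i : ℝ) : ℂ) := by
        intro i
        simp only [hf, Option.elim, Complex.conj_ofReal, ← Complex.ofReal_mul,
          Real.mul_self_sqrt (hν i)]
      rw [tsum_congr hpt, ← Complex.ofReal_tsum, htot]
      simp
    | none, some k =>
      rw [hinner]
      have hpt : ∀ i, conj (f none i) * f (some k) i
          = (Real.sqrt ((n:ℝ)+1) : ℂ) * ((ν i : ℂ) * x i k) := by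
        intro i
        simp only [hf, Option.elim, Complex.conj_ofReal]
        rw [← mul_assoc, ← Complex.ofReal_mul, hsq i, Complex.ofReal_mul, mul_assoc]
      rw [tsum_congr hpt, tsum_mul_left, hm1 k, mul_zero]
      simp
    | some k, none =>
      rw [hinner]
      have hpt : ∀ i, conj (f (some k) i) * f none i
          = (Real.sqrt ((n:ℝ)+1) : ℂ) * ((ν i : ℂ) * conj (x i k)) := by
        intro i
        simp only [hf, Option.elim, map_mul, Complex.conj_ofReal]
        rw [mul_comm ((Real.sqrt (((n:ℝ)+1) * ν i) : ℝ) : ℂ) (conj (x i k)),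
          mul_assoc, ← Complex.ofReal_mul, mul_comm (Real.sqrt (((n:ℝ)+1) * ν i)),
          hsq i, Complex.ofReal_mul, mul_comm (conj (x i k)), mul_assoc]
      rw [tsum_congr hpt, tsum_mul_left]
      have : (∑' i, ((ν i : ℂ) * conj (x i k))) = conj (∑' i, (ν i : ℂ) * x i k) := by
        rw [show (conj (∑' i, (ν i : ℂ) * x i k)) = star (∑' i, (ν i : ℂ) * x i k) from rfl,
          tsum_star]
        exact tsum_congr fun i => by simp [Complex.conj_ofReal]
      rw [this, hm1 k, map_zero, mul_zero]
      simp
    | some j, some k =>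
      rw [hinner]
      have hpt : ∀ i, conj (f (some j) i) * f (some k) i
          = (((n:ℝ)+1 : ℝ) : ℂ) * ((ν i : ℂ) * (conj (x i j) * x i k)) := by
        intro i
        simp only [hf, Option.elim, map_mul, Complex.conj_ofReal]
        have : ((Real.sqrt (((n:ℝ)+1) * ν i) : ℝ) : ℂ)
            * ((Real.sqrt (((n:ℝ)+1) * ν i) : ℝ) : ℂ) = ((((n:ℝ)+1) * ν i : ℝ) : ℂ) := by
          rw [← Complex.ofReal_mul, Real.mul_self_sqrt (mul_nonneg hN1 (hν i))]
        calc (Real.sqrt (((n:ℝ)+1) * ν i) : ℂ) * conj (x i j)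
              * ((Real.sqrt (((n:ℝ)+1) * ν i) : ℂ) * x i k)
            = ((Real.sqrt (((n:ℝ)+1) * ν i) : ℂ) * (Real.sqrt (((n:ℝ)+1) * ν i) : ℂ))
              * (conj (x i j) * x i k) := by ring
          _ = ((((n:ℝ)+1) * ν i : ℝ) : ℂ) * (conj (x i j) * x i k) := by rw [this]
          _ = (((n:ℝ)+1 : ℝ) : ℂ) * ((ν i : ℂ) * (conj (x i j) * x i k)) := by
              push_cast; ring
      rw [tsum_congr hpt, tsum_mul_left]
      by_cases hjk : j = k
      · subst hjk
        simp only [if_pos rfl]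
        have hpt2 : ∀ i, (ν i : ℂ) * (conj (x i j) * x i j)
            = ((ν i * ‖x i j‖ ^ 2 : ℝ) : ℂ) := by
          intro i
          rw [mul_comm (conj (x i j)), Complex.mul_conj]
          rw [Complex.normSq_eq_norm_sq]
          push_cast
          ring
        rw [tsum_congr hpt2, ← Complex.ofReal_tsum, hm3 j]
        rw [← Complex.ofReal_mul, mul_one_div, div_self (ne_of_gt hN1'), Complex.ofReal_one]
        simp
      · simp only [if_neg (by simpa using hjk)]
        have h2 := hm2 k j (Ne.symm hjk)
        have : (∑' i, (ν i : ℂ) * (conj (x i j) * x i k)) = 0 := by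
          rw [← h2]
          exact tsum_congr fun i => by ring
        rw [this, mul_zero]
        simp [hjk]
  -- Bessel
  have hbessel : ∀ i, ((n:ℝ)+2) * ν i ≤ 1 := by
    intro i
    set e : lp (fun _ : ℕ => ℂ) 2 := lp.single 2 i (1:ℂ) with he
    have hb := honb.sum_inner_products_le (s := (Finset.univ : Finset (Option (Fin (n+1))))) e
    have hie : ∀ j, (inner ℂ (v j) e : ℂ) = conj (f j i) := by
      intro j
      rw [he, lp.inner_single_right]
      simp [RCLike.inner_apply, hvapp]
    have hne : ‖e‖ ^ 2 = 1 := by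
      have h1 : (inner ℂ e e : ℂ) = 1 := by
        rw [he, lp.inner_single_right]
        simp [RCLike.inner_apply, lp.single_apply_self]
      have h2 := inner_self_eq_norm_sq_to_K (𝕜 := ℂ) e
      rw [h1] at h2
      have : ((‖e‖ ^ 2 : ℝ) : ℂ) = ((1:ℝ):ℂ) := by push_cast; exact h2.symm
      exact_mod_cast this
    rw [hne] at hb
    simp only [hie] at hb
    rw [Fintype.sum_option] at hb
    simp only [RCLike.norm_conj] at hb
    rw [hf0] at hb
    have hsum2 : ∑ k : Fin (n+1), ‖f (some k) i‖ ^ 2 = ((n:ℝ)+1) * ν i := by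
      calc ∑ k : Fin (n+1), ‖f (some k) i‖ ^ 2
          = ∑ k : Fin (n+1), (((n:ℝ)+1) * ν i) * ‖x i k‖ ^ 2 :=
            Finset.sum_congr rfl fun k _ => hfk k i
        _ = (((n:ℝ)+1) * ν i) * ∑ k, ‖x i k‖ ^ 2 := by rw [Finset.mul_sum]
        _ = ((n:ℝ)+1) * ν i := by rw [hxs i, mul_one]
    rw [hsum2] at hb
    nlinarith [hb]
  -- pointwise inequality
  have hkey : ∀ i, ((n:ℝ)+2) ^ (1-θ) * ν i ≤ ν i ^ θ := by
    intro i
    rcases eq_or_lt_of_le (hν i) with h0 | hpos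
    · rw [← h0]
      simp [Real.zero_rpow hθ0.ne']
    · have hN2 : (0:ℝ) < (n:ℝ)+2 := by positivity
      have hle : ν i ≤ (((n:ℝ)+2))⁻¹ := by
        have hb := hbessel i
        rw [inv_eq_one_div, le_div_iff₀ hN2]
        nlinarith
      have h1 : (((n:ℝ)+2)⁻¹) ^ (θ-1) ≤ ν i ^ (θ-1) :=
        Real.rpow_le_rpow_of_nonpos hpos hle (by linarith)
      have h2 : ((((n:ℝ)+2)⁻¹ : ℝ)) ^ (θ-1) = ((n:ℝ)+2) ^ (1-θ) := by
        rw [Real.inv_rpow hN2.le, ← Real.rpow_neg hN2.le, neg_sub]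
      have h3 : ν i ^ θ = ν i ^ (θ-1) * ν i := by
        rw [← Real.rpow_add_one hpos.ne' (θ-1), sub_add_cancel]
      rw [h3, ← h2]
      exact mul_le_mul_of_nonneg_right h1 (hν i)
  -- conclude
  calc ENNReal.ofReal (((n : ℝ) + 2) ^ (1 - θ))
      = ENNReal.ofReal (((n : ℝ) + 2) ^ (1 - θ)) * ENNReal.ofReal (∑' i, ν i) := by
        rw [htot, ENNReal.ofReal_one, mul_one]
    _ = ∑' i, ENNReal.ofReal (((n : ℝ) + 2) ^ (1 - θ) * ν i) := by
        rw [ENNReal.ofReal_tsum_of_nonneg hν hsum, ← ENNReal.tsum_mul_left]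
        exact tsum_congr fun i => (ENNReal.ofReal_mul (by positivity)).symm
    _ ≤ ∑' i, ENNReal.ofReal (ν i ^ θ) :=
        ENNReal.tsum_le_tsum fun i => ENNReal.ofReal_le_ofReal (hkey i)
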